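/- Let G_1=(V_1,E_1) and G_2=(V_2,E_2) be finite simple graphs with V_1 ∩ V_2 ≠ ∅ inducing the same subgraph H on V_1 ∩ V_2, let K be a field, and let G = G_1 #_H G_2 be their H-sum. Suppose H has a vertex v with deg_H(v) = |V_1 ∩ V_2| − 1 (i.e. v is adjacent in H to every other vertex of V_1 ∩ V_2). Then for i = 1,2 the cut algebra K[G_i] is an algebra retract of K[G], and moreover if V_{3−i} ∖ V_i ≠ ∅ then G_i is a neighborhood-minor of G. In particular, for i = 1,2, K[G_i] is an algebra retract of the cut algebra of any clique-sum of G_1 and G_2 (the case where H is a complete graph). -/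

import Mathlib

open scoped Classical

noncomputable section

namespace CutPaper

open MvPolynomial

/-- An edge `e` is cut by the partition `A | Aᶜ` if it has exactly one endpoint in `A`. -/
def IsCutEdge {V : Type} (A : Set V) (e : Sym2 V) : Prop :=
  ∃ u v : V, e = s(u, v) ∧ u ∈ A ∧ v ∉ A

/-- The cut set of `A`: all edges of `G` with exactly one endpoint in `A`. -/
def cutSet {V : Type} (G : SimpleGraph V) (A : Set V) : Set (Sym2 V) :=
  {e ∈ G.edgeSet | IsCutEdge A e}

lemma isCutEdge_compl {V : Type} (A : Set V) (e : Sym2 V) :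
    IsCutEdge Aᶜ e ↔ IsCutEdge A e := by
  constructor <;> rintro ⟨u, v, rfl, hu, hv⟩
  · exact ⟨v, u, Sym2.eq_swap, Set.notMem_compl_iff.mp hv, hu⟩
  · exact ⟨v, u, Sym2.eq_swap, hv, not_not_intro hu⟩

/-- Two subsets determine the same unordered partition `A | Aᶜ` of `V`
iff they are equal or complementary. -/
def partitionSetoid (V : Type) : Setoid (Set V) where
  r A B := B = A ∨ B = Aᶜ
  iseqv := by
    refine ⟨fun A => Or.inl rfl, @fun A B h => ?_, @fun A B C h1 h2 => ?_⟩
    · rcases h with rfl | rfl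
      · exact Or.inl rfl
      · exact Or.inr (compl_compl A).symm
    · rcases h1 with rfl | rfl <;> rcases h2 with rfl | rfl
      · exact Or.inl rfl
      · exact Or.inr rfl
      · exact Or.inr rfl
      · exact Or.inl (compl_compl A)

/-- The unordered partitions `A | Aᶜ` of `V`, indexing the variables of `S_G`. -/
abbrev Partition (V : Type) := Quotient (partitionSetoid V)

variable (K : Type) [CommRing K]

/-- The variable `q_{A|Aᶜ}` of the polynomial ring `S_G`. -/
def qPart {V : Type} (A : Set V) : MvPolynomial (Partition V) K :=
  X (Quotient.mk (partitionSetoid V) A)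

/-- The monomial `u_A = ∏_{e ∈ Cut(A)} s_e · ∏_{e ∈ E \ Cut(A)} t_e`;
the variable `s_e` is `X (true, e)` and `t_e` is `X (false, e)`. -/
def cutMonomial {V : Type} [Finite V] (G : SimpleGraph V) (A : Set V) :
    MvPolynomial (Bool × Sym2 V) K :=
  ∏ e ∈ (Set.toFinite G.edgeSet).toFinset,
    if IsCutEdge A e then X (true, e) else X (false, e)

lemma cutMonomial_compl {V : Type} [Finite V] (G : SimpleGraph V) (A : Set V) :
    cutMonomial K G Aᶜ = cutMonomial K G A := by
  unfold cutMonomial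
  refine Finset.prod_congr rfl fun e _ => ?_
  by_cases h : IsCutEdge A e
  · rw [if_pos ((isCutEdge_compl A e).mpr h), if_pos h]
  · rw [if_neg fun hc => h ((isCutEdge_compl A e).mp hc), if_neg h]

/-- The `K`-algebra homomorphism `φ_G : S_G → R_G`, `q_{A|Aᶜ} ↦ u_A`. -/
def phi {V : Type} [Finite V] (G : SimpleGraph V) :
    MvPolynomial (Partition V) K →ₐ[K] MvPolynomial (Bool × Sym2 V) K :=
  aeval fun p : Partition V =>
    Quotient.lift (cutMonomial K G)
      (fun A B hAB => by
        have h : B = A ∨ B = Aᶜ := hAB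
        rcases h with rfl | rfl
        · rfl
        · exact (cutMonomial_compl K G A).symm) p

/-- The cut ideal `I_G = ker φ_G`. -/
def cutIdeal {V : Type} [Finite V] (G : SimpleGraph V) :
    Ideal (MvPolynomial (Partition V) K) :=
  RingHom.ker (phi K G)

/-- The cut algebra `K[G]`, i.e. the image of `φ_G`: the `K`-subalgebra of `R_G`
generated by the monomials `u_A`. -/
def cutAlgebra {V : Type} [Finite V] (G : SimpleGraph V) :
    Subalgebra K (MvPolynomial (Bool × Sym2 V) K) :=
  Algebra.adjoin K {m | ∃ A : Set V, m = cutMonomial K G A}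

/-- The generator `u_A` of the cut algebra, as an element of the cut algebra. -/
def uGen {V : Type} [Finite V] (G : SimpleGraph V) (A : Set V) : ↥(cutAlgebra K G) :=
  ⟨cutMonomial K G A, Algebra.subset_adjoin ⟨A, rfl⟩⟩

/-- An element of `S_G/I` is homogeneous of degree `d` if it is the class of a homogeneous
polynomial of degree `d`. -/
def QuotHomogeneous {σ : Type} (I : Ideal (MvPolynomial σ K)) (d : ℕ)
    (x : MvPolynomial σ K ⧸ I) : Prop :=
  ∃ f : MvPolynomial σ K, f.IsHomogeneous d ∧ Ideal.Quotient.mk I f = x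

/-- The cut algebra of `H` is an algebra retract of the cut algebra of `G`:
there are homogeneous `K`-algebra homomorphisms `ι : K[H] → K[G]` (injective) and
`π : K[G] → K[H]` with `π ∘ ι = id`. -/
def CutAlgebraRetract {V W : Type} [Finite V] [Finite W]
    (H : SimpleGraph W) (G : SimpleGraph V) : Prop :=
  ∃ (ι : (MvPolynomial (Partition W) K ⧸ cutIdeal K H) →ₐ[K]
      (MvPolynomial (Partition V) K ⧸ cutIdeal K G))
    (π : (MvPolynomial (Partition V) K ⧸ cutIdeal K G) →ₐ[K]
      (MvPolynomial (Partition W) K ⧸ cutIdeal K H)),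
    Function.Injective ι ∧
    (∀ d x, QuotHomogeneous K (cutIdeal K H) d x →
      ∃ d', QuotHomogeneous K (cutIdeal K G) d' (ι x)) ∧
    (∀ d x, QuotHomogeneous K (cutIdeal K G) d x →
      ∃ d', QuotHomogeneous K (cutIdeal K H) d' (π x)) ∧
    π.comp ι = AlgHom.id K _

/-- The graph obtained from `G` by contracting the edge `{u, v}`: the vertex `u` is removed
and merged into `v`. -/
def contractEdge {V : Type} (G : SimpleGraph V) (u v : V) :
    SimpleGraph {x : V // x ≠ u} where
  Adj a b := a ≠ b ∧
    (G.Adj a b ∨ ((a : V) = v ∧ G.Adj u b) ∨ ((b : V) = v ∧ G.Adj a u))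
  symm := ⟨by
    rintro a b ⟨hne, h | ⟨ha, h⟩ | ⟨hb, h⟩⟩
    · exact ⟨hne.symm, Or.inl h.symm⟩
    · exact ⟨hne.symm, Or.inr (Or.inr ⟨ha, h.symm⟩)⟩
    · exact ⟨hne.symm, Or.inr (Or.inl ⟨hb, h.symm⟩)⟩⟩
  loopless := ⟨fun a h => h.1 rfl⟩

/-- The induced subgraph `G_W` is a neighborhood-minor of `G`: `W` and `W' = Wᶜ` are nonempty
and there is a vertex `v ∈ W` with `W ∩ N_G(W') ⊆ N_{G_W}[v]`. -/
def IsNeighborhoodMinor {V : Type} (G : SimpleGraph V) (W : Set V) : Prop :=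
  W.Nonempty ∧ Wᶜ.Nonempty ∧
    ∃ v ∈ W, ∀ x ∈ W, (∃ y ∈ Wᶜ, G.Adj y x) → x = v ∨ G.Adj v x

/-- The cut vector `δ_A ∈ {0,1}^E` of the partition `A | Aᶜ`. -/
def cutVector {V : Type} (G : SimpleGraph V) (A : Set V) : ↥G.edgeSet → ℝ :=
  fun e => if IsCutEdge A (e : Sym2 V) then 1 else 0

/-- The cut polytope `Cut^□(G) ⊆ ℝ^E`: the convex hull of the cut vectors. -/
def cutPolytope {V : Type} (G : SimpleGraph V) : Set (↥G.edgeSet → ℝ) :=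
  convexHull ℝ {x | ∃ A : Set V, x = cutVector G A}

/-- `F` is a face of `P`: either a trivial face (`P` or `∅`), or the intersection of `P`
with a supporting hyperplane. -/
def IsFace {α : Type} (P F : Set (α → ℝ)) : Prop :=
  F = P ∨ F = ∅ ∨
    ∃ (φ : (α → ℝ) →ₗ[ℝ] ℝ) (c : ℝ), φ ≠ 0 ∧
      (∀ x ∈ P, φ x ≤ c) ∧ F = P ∩ {x | φ x = c}

/-- `P` and `Q` are affinely isomorphic: there is a bijective map from `P` onto `Q`
extending to an affine map. -/
def AffinelyIsomorphic {α β : Type} (P : Set (α → ℝ)) (Q : Set (β → ℝ)) : Prop :=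
  ∃ f : (α → ℝ) →ᵃ[ℝ] (β → ℝ), Set.InjOn f P ∧ f '' P = Q

/-- The monomial `z · ∏_{e ∈ Cut(A)} y_e` of the polytopal algebra of the cut polytope;
the variable `z` is `X none` and `y_e` is `X (some e)`. -/
def polytopeMonomial {V : Type} [Finite V] (G : SimpleGraph V) (A : Set V) :
    MvPolynomial (Option (Sym2 V)) K :=
  X none * ∏ e ∈ (Set.toFinite (cutSet G A)).toFinset, X (some e)

/-- The polytopal algebra `K[Cut^□(G)]`: the subalgebra of `K[y_e (e ∈ E), z]` generated by
the monomials `z · y^{δ_A}` attached to the lattice points (= cut vectors) of `Cut^□(G)`. -/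
def polytopalAlgebra {V : Type} [Finite V] (G : SimpleGraph V) :
    Subalgebra K (MvPolynomial (Option (Sym2 V)) K) :=
  Algebra.adjoin K {m | ∃ A : Set V, m = polytopeMonomial K G A}

/-- `G'` is a combinatorial retract of `G`: it is obtained from `G` by a finite sequence of
edge contractions and neighborhood-minors. -/
inductive CombinatorialRetract : ∀ {V W : Type}, SimpleGraph V → SimpleGraph W → Prop
  | refl {V : Type} (G : SimpleGraph V) : CombinatorialRetract G G
  | contract {V W : Type} (G : SimpleGraph V) (u v : V) (huv : G.Adj u v)
      (G' : SimpleGraph W) (h : CombinatorialRetract (contractEdge G u v) G') :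
      CombinatorialRetract G G'
  | nbhdMinor {V W : Type} (G : SimpleGraph V) (S : Set V)
      (hS : IsNeighborhoodMinor G S) (G' : SimpleGraph W)
      (h : CombinatorialRetract (SimpleGraph.induce S G) G') :
      CombinatorialRetract G G'

/-! ### Auxiliary machinery for the retract theorem -/

section RetractAux

open SimpleGraph

variable {V : Type}

lemma isCutEdge_pair (A : Set V) (x y : V) :
    IsCutEdge A s(x, y) ↔ (x ∈ A ∧ y ∉ A) ∨ (y ∈ A ∧ x ∉ A) := by
  constructor
  · rintro ⟨u, w, he, hu, hw⟩
    rw [Sym2.eq_iff] at he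
    rcases he with ⟨rfl, rfl⟩ | ⟨rfl, rfl⟩
    · exact Or.inl ⟨hu, hw⟩
    · exact Or.inr ⟨hu, hw⟩
  · rintro (⟨h1, h2⟩ | ⟨h1, h2⟩)
    · exact ⟨x, y, rfl, h1, h2⟩
    · exact ⟨y, x, Sym2.eq_swap, h1, h2⟩

variable [Finite V] (W : Set V)

/-- Extension of a partition of `W` to a partition of `V`, putting `Wᶜ` on the side of `v`. -/
def extSet (v : V) (hv : v ∈ W) (B : Set ↥W) : Set V :=
  if (⟨v, hv⟩ : ↥W) ∈ B then Subtype.val '' B ∪ Wᶜ else Subtype.val '' Bᶜ ∪ Wᶜ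

lemma extSet_compl (v : V) (hv : v ∈ W) (B : Set ↥W) :
    extSet W v hv Bᶜ = extSet W v hv B := by
  unfold extSet
  by_cases hB : (⟨v, hv⟩ : ↥W) ∈ B
  · rw [if_pos hB, if_neg (fun hc => hc hB), compl_compl]
  · rw [if_neg hB, if_pos (show (⟨v, hv⟩ : ↥W) ∈ Bᶜ from hB)]

def extPart (v : V) (hv : v ∈ W) : Partition ↥W → Partition V :=
  Quotient.lift (fun B => Quotient.mk (partitionSetoid V) (extSet W v hv B))
    (by
      intro B B' h
      rcases h with rfl | rfl
      · rfl
      · exact congrArg (fun S => Quotient.mk (partitionSetoid V) S)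
          (extSet_compl W v hv B).symm)

def resPart : Partition V → Partition ↥W :=
  Quotient.lift (fun A => Quotient.mk (partitionSetoid ↥W) (Subtype.val ⁻¹' A))
    (by
      intro A A' h
      rcases h with rfl | rfl
      · rfl
      · exact Quotient.sound (Or.inr rfl))

lemma preimage_extA (B : Set ↥W) :
    (Subtype.val ⁻¹' (Subtype.val '' B ∪ Wᶜ) : Set ↥W) = B := by
  ext x
  simp only [Set.mem_preimage, Set.mem_union, Set.mem_compl_iff, Set.mem_image]
  constructor
  · rintro (⟨y, hy, hxy⟩ | hc)
    · rwa [show y = x from Subtype.coe_injective hxy] at hy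
    · exact absurd x.2 hc
  · intro hx
    exact Or.inl ⟨x, hx, rfl⟩

lemma res_ext (v : V) (hv : v ∈ W) (p : Partition ↥W) :
    resPart W (extPart W v hv p) = p := by
  induction p using Quotient.ind with
  | _ B =>
    show Quotient.mk (partitionSetoid ↥W) (Subtype.val ⁻¹' extSet W v hv B)
        = Quotient.mk (partitionSetoid ↥W) B
    unfold extSet
    by_cases hB : (⟨v, hv⟩ : ↥W) ∈ B
    · rw [if_pos hB, preimage_extA]
    · rw [if_neg hB, preimage_extA]
      exact Quotient.sound (Or.inr (compl_compl B).symm)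

lemma mem_extA_iff (B : Set ↥W) (x : V) (hx : x ∈ W) :
    x ∈ Subtype.val '' B ∪ Wᶜ ↔ (⟨x, hx⟩ : ↥W) ∈ B := by
  constructor
  · rintro (⟨y, hy, hxy⟩ | hc)
    · rwa [show y = (⟨x, hx⟩ : ↥W) from Subtype.coe_injective hxy] at hy
    · exact absurd hx hc
  · intro h
    exact Or.inl ⟨⟨x, hx⟩, h, rfl⟩

lemma isCutEdge_map_iff (A : Set V) (e' : Sym2 ↥W) :
    IsCutEdge A (Sym2.map Subtype.val e') ↔ IsCutEdge (Subtype.val ⁻¹' A : Set ↥W) e' := by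
  induction e' using Sym2.ind with
  | _ a b =>
    rw [Sym2.map_pair_eq, isCutEdge_pair, isCutEdge_pair]
    exact Iff.rfl

lemma mape_mem_edgeFinset (G : SimpleGraph V) (e' : Sym2 ↥W) :
    Sym2.map Subtype.val e' ∈ (Set.toFinite G.edgeSet).toFinset ↔
      e' ∈ (Set.toFinite (SimpleGraph.induce W G).edgeSet).toFinset := by
  induction e' using Sym2.ind with
  | _ a b =>
    rw [Sym2.map_pair_eq, Set.Finite.mem_toFinset, Set.Finite.mem_toFinset,
      SimpleGraph.mem_edgeSet, SimpleGraph.mem_edgeSet]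
    exact Iff.rfl

lemma mape_injective : Function.Injective (Sym2.map (Subtype.val : ↥W → V)) :=
  Sym2.map.injective Subtype.coe_injective

lemma filter_liftable (G : SimpleGraph V) :
    ((Set.toFinite G.edgeSet).toFinset.filter
        fun e => ∃ e' : Sym2 ↥W, Sym2.map Subtype.val e' = e)
      = (Set.toFinite (SimpleGraph.induce W G).edgeSet).toFinset.image (Sym2.map Subtype.val) := by
  ext e
  simp only [Finset.mem_filter, Finset.mem_image]
  constructor
  · rintro ⟨he, e', rfl⟩
    exact ⟨e', (mape_mem_edgeFinset W G e').mp he, rfl⟩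
  · rintro ⟨e', he', rfl⟩
    exact ⟨(mape_mem_edgeFinset W G e').mpr he', e', rfl⟩

variable (K : Type) [Field K]

/-- The variable-killing homomorphism `R_G → R_H` used to show that the restriction map
descends to cut algebras. -/
def rhoMap : MvPolynomial (Bool × Sym2 V) K →ₐ[K] MvPolynomial (Bool × Sym2 ↥W) K :=
  aeval fun be =>
    if h : ∃ e' : Sym2 ↥W, Sym2.map Subtype.val e' = be.2 then X (be.1, h.choose) else 1

lemma choose_mape_eq {e' : Sym2 ↥W}
    (h : ∃ e'' : Sym2 ↥W, Sym2.map Subtype.val e'' = Sym2.map Subtype.val e') :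
    h.choose = e' :=
  mape_injective W h.choose_spec

lemma phi_mk (G : SimpleGraph V) (A : Set V) :
    phi K G (X (Quotient.mk (partitionSetoid V) A)) = cutMonomial K G A := by
  simp [phi]

lemma rho_cutMonomial (G : SimpleGraph V) (A : Set V) :
    rhoMap W K (cutMonomial K G A)
      = cutMonomial K (SimpleGraph.induce W G) (Subtype.val ⁻¹' A) := by
  classical
  unfold cutMonomial
  rw [map_prod]
  have step : ∀ e ∈ (Set.toFinite G.edgeSet).toFinset,
      rhoMap W K (if IsCutEdge A e then X (true, e) else X (false, e))
        = if h : ∃ e' : Sym2 ↥W, Sym2.map Subtype.val e' = e then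
            (if IsCutEdge A e then X (true, h.choose) else X (false, h.choose)) else 1 := by
    intro e _
    by_cases hc : IsCutEdge A e <;>
      by_cases h : ∃ e' : Sym2 ↥W, Sym2.map Subtype.val e' = e <;>
      simp [rhoMap, hc, h]
  rw [Finset.prod_congr rfl step]
  rw [← Finset.prod_filter_mul_prod_filter_not ((Set.toFinite G.edgeSet).toFinset)
      (fun e => ∃ e' : Sym2 ↥W, Sym2.map Subtype.val e' = e)]
  have h2 : ∀ e ∈ (Set.toFinite G.edgeSet).toFinset.filter
      (fun e => ¬ ∃ e' : Sym2 ↥W, Sym2.map Subtype.val e' = e),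
      (if h : ∃ e' : Sym2 ↥W, Sym2.map Subtype.val e' = e then
          (if IsCutEdge A e then X (true, h.choose) else X (false, h.choose))
        else (1 : MvPolynomial (Bool × Sym2 ↥W) K)) = 1 := by
    intro e he
    rw [dif_neg (Finset.mem_filter.mp he).2]
  rw [Finset.prod_congr rfl h2, Finset.prod_const_one, mul_one, filter_liftable,
    Finset.prod_image (fun x _ y _ h => mape_injective W h)]
  refine Finset.prod_congr rfl fun e' he' => ?_
  rw [dif_pos ⟨e', rfl⟩, choose_mape_eq, isCutEdge_map_iff]

lemma phi_comp_rename_res (G : SimpleGraph V) :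
    (phi K (SimpleGraph.induce W G)).comp (rename (resPart W))
      = (rhoMap W K).comp (phi K G) := by
  apply MvPolynomial.algHom_ext
  intro p
  induction p using Quotient.ind with
  | _ A =>
    simp only [AlgHom.comp_apply, rename_X]
    show phi K (SimpleGraph.induce W G)
        (X (Quotient.mk (partitionSetoid ↥W) (Subtype.val ⁻¹' A)))
      = rhoMap W K (phi K G (X (Quotient.mk (partitionSetoid V) A)))
    rw [phi_mk, phi_mk, rho_cutMonomial]

/-- The edges of `G` joining `x ∈ W`, `x ≠ v`, to a vertex outside `W`,
indexed by the corresponding edge `s(v, x)` of the induced graph. -/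
def Out2 (G : SimpleGraph V) (v : V) (hv : v ∈ W) (e' : Sym2 ↥W) : Finset (Sym2 V) :=
  (Set.toFinite G.edgeSet).toFinset.filter fun e =>
    ∃ (x : V) (hx : x ∈ W), x ≠ v ∧ e' = s((⟨v, hv⟩ : ↥W), ⟨x, hx⟩) ∧ ∃ y, y ∉ W ∧ e = s(x, y)

/-- The constant monomial collecting the variables `t_e` of all edges that never get cut. -/
def constMono (G : SimpleGraph V) (v : V) : MvPolynomial (Bool × Sym2 V) K :=
  ∏ e ∈ (Set.toFinite G.edgeSet).toFinset.filter (fun e =>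
      (¬ ∃ e' : Sym2 ↥W, Sym2.map Subtype.val e' = e) ∧
      ¬ ∃ x y, x ∈ W ∧ y ∉ W ∧ x ≠ v ∧ e = s(x, y)), X (false, e)

/-- The monomial-transfer homomorphism `R_H → R_G` along which `φ_G ∘ ι = σ ∘ φ_H`. -/
def sigmaMap (G : SimpleGraph V) (v : V) (hv : v ∈ W) (e₀ : Sym2 ↥W) :
    MvPolynomial (Bool × Sym2 ↥W) K →ₐ[K] MvPolynomial (Bool × Sym2 V) K :=
  aeval fun be =>
    (if be.2 = e₀ then constMono W K G v else 1) *
      (X (be.1, Sym2.map Subtype.val be.2) * ∏ e ∈ Out2 W G v hv be.2, X (be.1, e))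

lemma sigma_cutMonomial (G : SimpleGraph V) (v : V) (hv : v ∈ W)
    (hyp : ∀ x y, G.Adj x y → y ∉ W → x ∈ W → x ≠ v → G.Adj v x)
    (e₀ : Sym2 ↥W)
    (he₀ : e₀ ∈ (Set.toFinite (SimpleGraph.induce W G).edgeSet).toFinset)
    (B : Set ↥W) (hB : (⟨v, hv⟩ : ↥W) ∈ B) :
    sigmaMap W K G v hv e₀ (cutMonomial K (SimpleGraph.induce W G) B)
      = cutMonomial K G (Subtype.val '' B ∪ Wᶜ) := by
  classical
  set A : Set V := Subtype.val '' B ∪ Wᶜ with hA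
  set ESH := (Set.toFinite (SimpleGraph.induce W G).edgeSet).toFinset with hESH
  set ESG := (Set.toFinite G.edgeSet).toFinset with hESG
  have hAB : (Subtype.val ⁻¹' A : Set ↥W) = B := preimage_extA W B
  set p1 : Sym2 V → Prop := fun e => ∃ e' : Sym2 ↥W, Sym2.map Subtype.val e' = e with hp1
  set p2 : Sym2 V → Prop := fun e => ∃ x y, x ∈ W ∧ y ∉ W ∧ x ≠ v ∧ e = s(x, y) with hp2
  have h12 : ∀ e, p2 e → ¬ p1 e := by
    rintro e ⟨x, y, hx, hy, hxv, rfl⟩ ⟨e', he'⟩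
    induction e' using Sym2.ind with
    | _ a b =>
      rw [Sym2.map_pair_eq, Sym2.eq_iff] at he'
      rcases he' with ⟨h1, h2⟩ | ⟨h1, h2⟩
      · exact hy (h2 ▸ b.2)
      · exact hy (h1 ▸ a.2)
  -- cut transfer on inner edges
  have hinner : ∀ e' : Sym2 ↥W,
      IsCutEdge A (Sym2.map Subtype.val e') ↔ IsCutEdge B e' := by
    intro e'
    rw [isCutEdge_map_iff, hAB]
  -- LHS computation
  have lstep : ∀ e' ∈ ESH,
      sigmaMap W K G v hv e₀ (if IsCutEdge B e' then X (true, e') else X (false, e'))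
        = (if e' = e₀ then constMono W K G v else 1) *
            ((if IsCutEdge B e' then X (true, Sym2.map Subtype.val e')
                else X (false, Sym2.map Subtype.val e')) *
             (if IsCutEdge B e' then ∏ e ∈ Out2 W G v hv e', X (true, e)
                else ∏ e ∈ Out2 W G v hv e', X (false, e))) := by
    intro e' _
    by_cases hc : IsCutEdge B e' <;> simp [sigmaMap, hc]
  have hLHS : sigmaMap W K G v hv e₀ (cutMonomial K (SimpleGraph.induce W G) B)
      = constMono W K G v *
        ((∏ e' ∈ ESH, (if IsCutEdge B e' then X (true, Sym2.map Subtype.val e')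
            else X (false, Sym2.map Subtype.val e'))) *
         (∏ e' ∈ ESH, (if IsCutEdge B e' then ∏ e ∈ Out2 W G v hv e', X (true, e)
            else ∏ e ∈ Out2 W G v hv e', X (false, e)))) := by
    unfold cutMonomial
    rw [map_prod, Finset.prod_congr rfl lstep, Finset.prod_mul_distrib,
      Finset.prod_mul_distrib]
    have hconst : (∏ e' ∈ ESH, (if e' = e₀ then constMono W K G v
        else (1 : MvPolynomial (Bool × Sym2 V) K))) = constMono W K G v := by
      rw [← Finset.mul_prod_erase ESH _ he₀, if_pos rfl]
      have hrest : ∀ e' ∈ ESH.erase e₀, (if e' = e₀ then constMono W K G v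
          else (1 : MvPolynomial (Bool × Sym2 V) K)) = 1 := by
        intro e' he'
        rw [if_neg (Finset.ne_of_mem_erase he')]
      rw [Finset.prod_congr rfl hrest, Finset.prod_const_one, mul_one]
    rw [hconst]
  rw [hLHS]
  -- RHS decomposition
  have h1 : (∏ e ∈ ESG.filter p1, (if IsCutEdge A e
          then (X (true, e) : MvPolynomial (Bool × Sym2 V) K) else X (false, e)))
      = ∏ e' ∈ ESH, (if IsCutEdge B e' then X (true, Sym2.map Subtype.val e')
          else X (false, Sym2.map Subtype.val e')) := by
    rw [hp1, hESG, filter_liftable, Finset.prod_image (fun x _ y _ h => mape_injective W h)]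
    refine Finset.prod_congr rfl fun e' _ => ?_
    rw [hinner]
  have hbi : ESG.filter p2 = ESH.biUnion (Out2 W G v hv) := by
    ext e
    simp only [Finset.mem_filter, Finset.mem_biUnion, Out2, hp2]
    constructor
    · rintro ⟨he, x, y, hx, hy, hxv, rfl⟩
      have hadj : G.Adj x y := by
        rw [hESG, Set.Finite.mem_toFinset, SimpleGraph.mem_edgeSet] at he
        exact he
      have hvadj : (SimpleGraph.induce W G).Adj ⟨v, hv⟩ ⟨x, hx⟩ := by
        show G.Adj v x
        exact hyp x y hadj hy hx hxv
      refine ⟨s((⟨v, hv⟩ : ↥W), ⟨x, hx⟩), ?_, ?_⟩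
      · rw [hESH, Set.Finite.mem_toFinset, SimpleGraph.mem_edgeSet]
        exact hvadj
      · exact ⟨he, x, hx, hxv, rfl, y, hy, rfl⟩
    · rintro ⟨e', _, he, x, hx, hxv, rfl, y, hy, rfl⟩
      exact ⟨he, x, y, hx, hy, hxv, rfl⟩
  have hdisj : (↑ESH : Set (Sym2 ↥W)).PairwiseDisjoint (Out2 W G v hv) := by
    intro a _ b _ hab
    simp only [Function.onFun]
    rw [Finset.disjoint_left]
    intro e hea heb
    simp only [Out2, Finset.mem_filter] at hea heb
    obtain ⟨_, x1, hx1, hv1, rfl, y1, hy1, he1⟩ := hea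
    obtain ⟨_, x2, hx2, hv2, hb2, y2, hy2, he2⟩ := heb
    have heq : s(x1, y1) = s(x2, y2) := he1.symm.trans he2
    rw [Sym2.eq_iff] at heq
    rcases heq with ⟨rfl, rfl⟩ | ⟨rfl, rfl⟩
    · exact hab (by rw [hb2])
    · exact hy2 hx1
  have h2 : (∏ e ∈ ESG.filter p2, (if IsCutEdge A e
          then (X (true, e) : MvPolynomial (Bool × Sym2 V) K) else X (false, e)))
      = ∏ e' ∈ ESH, (if IsCutEdge B e' then ∏ e ∈ Out2 W G v hv e', X (true, e)
          else ∏ e ∈ Out2 W G v hv e', X (false, e)) := by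
    rw [hbi, Finset.prod_biUnion hdisj]
    refine Finset.prod_congr rfl fun e' he' => ?_
    by_cases hc : IsCutEdge B e'
    · rw [if_pos hc]
      refine Finset.prod_congr rfl fun e he => ?_
      simp only [Out2, Finset.mem_filter] at he
      obtain ⟨_, x, hx, hxv, rfl, y, hy, rfl⟩ := he
      rw [isCutEdge_pair] at hc
      have hxB : (⟨x, hx⟩ : ↥W) ∉ B := by
        rcases hc with ⟨_, h⟩ | ⟨_, h⟩
        · exact h
        · exact absurd hB h
      have : IsCutEdge A s(x, y) := by
        rw [isCutEdge_pair]
        refine Or.inr ⟨Or.inr hy, ?_⟩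
        rw [hA, mem_extA_iff W B x hx]
        exact hxB
      rw [if_pos this]
    · rw [if_neg hc]
      refine Finset.prod_congr rfl fun e he => ?_
      simp only [Out2, Finset.mem_filter] at he
      obtain ⟨_, x, hx, hxv, rfl, y, hy, rfl⟩ := he
      rw [isCutEdge_pair] at hc
      push_neg at hc
      have hxB : (⟨x, hx⟩ : ↥W) ∈ B := hc.1 hB
      have : ¬ IsCutEdge A s(x, y) := by
        rw [isCutEdge_pair]
        push_neg
        have hxA : x ∈ A := by
          rw [hA, mem_extA_iff W B x hx]; exact hxB
        have hyA : y ∈ A := Or.inr hy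
        exact ⟨fun _ => hyA, fun _ => hxA⟩
      rw [if_neg this]
  have h3 : (∏ e ∈ ESG.filter (fun e => ¬ p1 e ∧ ¬ p2 e),
        (if IsCutEdge A e
          then (X (true, e) : MvPolynomial (Bool × Sym2 V) K) else X (false, e)))
      = constMono W K G v := by
    unfold constMono
    refine Finset.prod_congr rfl ?_
    intro e he
    simp only [Finset.mem_filter] at he
    obtain ⟨heG, hnp1, hnp2⟩ := he
    revert heG hnp1 hnp2
    induction e using Sym2.ind with
    | _ x y =>
      intro heG hnp1 hnp2
      have hall : ∀ z t : V, s(z, t) = s(x, y) → z ∈ A := by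
        intro z t hzt
        by_cases hzW : z ∈ W
        · by_cases htW : t ∈ W
          · exfalso
            apply hnp1
            refine ⟨s((⟨z, hzW⟩ : ↥W), ⟨t, htW⟩), ?_⟩
            rw [Sym2.map_pair_eq]
            exact hzt
          · by_cases hzv : z = v
            · subst hzv
              exact Or.inl ⟨⟨z, hv⟩, hB, rfl⟩
            · exfalso
              exact hnp2 ⟨z, t, hzW, htW, hzv, hzt.symm⟩
        · exact Or.inr hzW
      have : ¬ IsCutEdge A s(x, y) := by
        rw [isCutEdge_pair]
        push_neg
        exact ⟨fun _ => hall y x Sym2.eq_swap, fun _ => hall x y rfl⟩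
      rw [if_neg this]
  -- combine
  have hsplit : cutMonomial K G A
      = (∏ e ∈ ESG.filter p1, (if IsCutEdge A e
            then (X (true, e) : MvPolynomial (Bool × Sym2 V) K) else X (false, e))) *
        ((∏ e ∈ ESG.filter p2, (if IsCutEdge A e then X (true, e) else X (false, e))) *
         (∏ e ∈ ESG.filter (fun e => ¬ p1 e ∧ ¬ p2 e),
            (if IsCutEdge A e then X (true, e) else X (false, e)))) := by
    have hf2 : (ESG.filter (fun e => ¬ p1 e)).filter p2 = ESG.filter p2 := by
      rw [Finset.filter_filter]
      apply Finset.filter_congr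
      intro e _
      exact ⟨fun h => h.2, fun h => ⟨h12 e h, h⟩⟩
    have hf3 : (ESG.filter (fun e => ¬ p1 e)).filter (fun e => ¬ p2 e)
        = ESG.filter (fun e => ¬ p1 e ∧ ¬ p2 e) := by
      rw [Finset.filter_filter]
    unfold cutMonomial
    rw [← Finset.prod_filter_mul_prod_filter_not ESG p1
        (fun e => if IsCutEdge A e then X (true, e) else X (false, e)),
      ← Finset.prod_filter_mul_prod_filter_not (ESG.filter (fun e => ¬ p1 e)) p2
        (fun e => if IsCutEdge A e then X (true, e) else X (false, e)),
      hf2, hf3]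
  rw [hsplit, h1, h2, h3]
  ring

lemma phi_comp_rename_ext (G : SimpleGraph V) (v : V) (hv : v ∈ W)
    (hyp : ∀ x y, G.Adj x y → y ∉ W → x ∈ W → x ≠ v → G.Adj v x)
    (e₀ : Sym2 ↥W)
    (he₀ : e₀ ∈ (Set.toFinite (SimpleGraph.induce W G).edgeSet).toFinset) :
    (phi K G).comp (rename (extPart W v hv))
      = (sigmaMap W K G v hv e₀).comp (phi K (SimpleGraph.induce W G)) := by
  apply MvPolynomial.algHom_ext
  intro p
  induction p using Quotient.ind with
  | _ B =>
    simp only [AlgHom.comp_apply, rename_X]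
    show phi K G (X (Quotient.mk (partitionSetoid V) (extSet W v hv B)))
      = sigmaMap W K G v hv e₀ (phi K (SimpleGraph.induce W G)
          (X (Quotient.mk (partitionSetoid ↥W) B)))
    rw [phi_mk, phi_mk]
    by_cases hB : (⟨v, hv⟩ : ↥W) ∈ B
    · rw [show extSet W v hv B = Subtype.val '' B ∪ Wᶜ from if_pos hB,
        sigma_cutMonomial W K G v hv hyp e₀ he₀ B hB]
    · rw [show extSet W v hv B = Subtype.val '' Bᶜ ∪ Wᶜ from if_neg hB]
      conv_rhs => rw [← cutMonomial_compl K (SimpleGraph.induce W G) B]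
      exact (sigma_cutMonomial W K G v hv hyp e₀ he₀ Bᶜ hB).symm

/-- The main retract lemma: if `v ∈ W` dominates all vertices of `W` having a neighbor
outside `W`, then `K[G_W]` is an algebra retract of `K[G]`. -/
lemma retract_induce (G : SimpleGraph V) (v : V) (hv : v ∈ W)
    (hyp : ∀ x y, G.Adj x y → y ∉ W → x ∈ W → x ≠ v → G.Adj v x) :
    CutAlgebraRetract K (SimpleGraph.induce W G) G := by
  classical
  set H := SimpleGraph.induce W G with hH
  -- the projection π, which always exists
  have hπker : ∀ f ∈ cutIdeal K G,
      ((Ideal.Quotient.mkₐ K (cutIdeal K H)).comp (rename (resPart W))) f = 0 := by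
    intro f hf
    have hf0 : phi K G f = 0 := RingHom.mem_ker.mp hf
    simp only [AlgHom.comp_apply, Ideal.Quotient.mkₐ_eq_mk]
    rw [Ideal.Quotient.eq_zero_iff_mem]
    have hker : phi K H (rename (resPart W) f) = 0 := by
      have h := congrFun (congrArg DFunLike.coe (phi_comp_rename_res W K G)) f
      simp only [AlgHom.comp_apply] at h
      rw [h, hf0]
      exact map_zero _
    exact RingHom.mem_ker.mpr hker
  set π : (MvPolynomial (Partition V) K ⧸ cutIdeal K G) →ₐ[K]
      (MvPolynomial (Partition ↥W) K ⧸ cutIdeal K H) :=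
    Ideal.Quotient.liftₐ (cutIdeal K G)
      ((Ideal.Quotient.mkₐ K (cutIdeal K H)).comp (rename (resPart W))) hπker with hπ
  have hπmk : ∀ f, π (Ideal.Quotient.mk (cutIdeal K G) f)
      = Ideal.Quotient.mk (cutIdeal K H) (rename (resPart W) f) := by
    intro f
    rw [hπ, Ideal.Quotient.liftₐ_apply]
    erw [Ideal.Quotient.lift_mk]
  by_cases hne : ((Set.toFinite H.edgeSet).toFinset).Nonempty
  · -- non-degenerate case
    obtain ⟨e₀, he₀⟩ := hne
    have hιker : ∀ f ∈ cutIdeal K H,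
        ((Ideal.Quotient.mkₐ K (cutIdeal K G)).comp (rename (extPart W v hv))) f = 0 := by
      intro f hf
      have hf0 : phi K H f = 0 := RingHom.mem_ker.mp hf
      simp only [AlgHom.comp_apply, Ideal.Quotient.mkₐ_eq_mk]
      rw [Ideal.Quotient.eq_zero_iff_mem]
      have hker : phi K G (rename (extPart W v hv) f) = 0 := by
        have h := congrFun (congrArg DFunLike.coe (phi_comp_rename_ext W K G v hv hyp e₀ he₀)) f
        simp only [AlgHom.comp_apply] at h
        rw [h, hf0]
        exact map_zero _
      exact RingHom.mem_ker.mpr hker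
    set ι : (MvPolynomial (Partition ↥W) K ⧸ cutIdeal K H) →ₐ[K]
        (MvPolynomial (Partition V) K ⧸ cutIdeal K G) :=
      Ideal.Quotient.liftₐ (cutIdeal K H)
        ((Ideal.Quotient.mkₐ K (cutIdeal K G)).comp (rename (extPart W v hv))) hιker with hι
    have hιmk : ∀ f, ι (Ideal.Quotient.mk (cutIdeal K H) f)
        = Ideal.Quotient.mk (cutIdeal K G) (rename (extPart W v hv) f) := by
      intro f
      rw [hι, Ideal.Quotient.liftₐ_apply]
      erw [Ideal.Quotient.lift_mk]
    have hcomp : π.comp ι = AlgHom.id K _ := by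
      apply Ideal.Quotient.algHom_ext
      apply MvPolynomial.algHom_ext
      intro p
      simp only [AlgHom.comp_apply, Ideal.Quotient.mkₐ_eq_mk, AlgHom.id_apply]
      rw [hιmk, hπmk, rename_X, rename_X, res_ext]
    refine ⟨ι, π, ?_, ?_, ?_, hcomp⟩
    · intro a b hab
      have h1 := congrFun (congrArg DFunLike.coe hcomp) a
      have h2 := congrFun (congrArg DFunLike.coe hcomp) b
      simp only [AlgHom.comp_apply, AlgHom.id_apply] at h1 h2
      rw [← h1, ← h2, hab]
    · rintro d x ⟨f, hf, rfl⟩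
      exact ⟨d, rename (extPart W v hv) f, hf.rename_isHomogeneous, (hιmk f).symm⟩
    · rintro d x ⟨f, hf, rfl⟩
      exact ⟨d, rename (resPart W) f, hf.rename_isHomogeneous, (hπmk f).symm⟩
  · -- degenerate case: H has no edges, so K[H] = K
    have hempty : (Set.toFinite H.edgeSet).toFinset = ∅ :=
      Finset.not_nonempty_iff_eq_empty.mp hne
    have hmon : ∀ B : Set ↥W, cutMonomial K H B = 1 := by
      intro B
      unfold cutMonomial
      rw [hempty, Finset.prod_empty]
    have hphiH : ∀ f : MvPolynomial (Partition ↥W) K,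
        phi K H f = C (aeval (fun _ : Partition ↥W => (1 : K)) f) := by
      intro f
      have : phi K H = (Algebra.ofId K (MvPolynomial (Bool × Sym2 ↥W) K)).comp
          (aeval fun _ : Partition ↥W => (1 : K)) := by
        apply MvPolynomial.algHom_ext
        intro p
        induction p using Quotient.ind with
        | _ B =>
          simp only [AlgHom.comp_apply, aeval_X]
          rw [phi_mk, hmon, Algebra.ofId_apply, map_one]
      rw [this]
      simp [Algebra.ofId_apply, MvPolynomial.algebraMap_eq]
    have hιker : ∀ f ∈ cutIdeal K H,
        ((Ideal.Quotient.mkₐ K (cutIdeal K G)).comp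
          ((Algebra.ofId K (MvPolynomial (Partition V) K)).comp
            (aeval fun _ : Partition ↥W => (1 : K)))) f = 0 := by
      intro f hf
      have hf0 : phi K H f = 0 := RingHom.mem_ker.mp hf
      rw [hphiH] at hf0
      have hev : aeval (fun _ : Partition ↥W => (1 : K)) f = 0 := by
        have h0 := congrArg (coeff 0) hf0
        rwa [coeff_zero_C, MvPolynomial.coeff_zero] at h0
      simp [hev, AlgHom.comp_apply]
    set ι : (MvPolynomial (Partition ↥W) K ⧸ cutIdeal K H) →ₐ[K]
        (MvPolynomial (Partition V) K ⧸ cutIdeal K G) :=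
      Ideal.Quotient.liftₐ (cutIdeal K H)
        ((Ideal.Quotient.mkₐ K (cutIdeal K G)).comp
          ((Algebra.ofId K (MvPolynomial (Partition V) K)).comp
            (aeval fun _ : Partition ↥W => (1 : K)))) hιker with hι
    have hιmk : ∀ f, ι (Ideal.Quotient.mk (cutIdeal K H) f)
        = Ideal.Quotient.mk (cutIdeal K G)
            (C (aeval (fun _ : Partition ↥W => (1 : K)) f)) := by
      intro f
      rw [hι, Ideal.Quotient.liftₐ_apply]
      erw [Ideal.Quotient.lift_mk]
    have hmkone : ∀ B : Set ↥W,
        Ideal.Quotient.mk (cutIdeal K H) (X (Quotient.mk (partitionSetoid ↥W) B))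
          = Ideal.Quotient.mk (cutIdeal K H) 1 := by
      intro B
      rw [Ideal.Quotient.eq]
      refine RingHom.mem_ker.mpr ?_
      rw [map_sub, map_one, phi_mk, hmon, sub_self]
    have hcomp : π.comp ι = AlgHom.id K _ := by
      apply Ideal.Quotient.algHom_ext
      apply MvPolynomial.algHom_ext
      intro p
      induction p using Quotient.ind with
      | _ B =>
        simp only [AlgHom.comp_apply, Ideal.Quotient.mkₐ_eq_mk, AlgHom.id_apply]
        rw [hιmk, hπmk]
        simp only [aeval_X]
        rw [map_one, map_one, hmkone]
    refine ⟨ι, π, ?_, ?_, ?_, hcomp⟩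
    · intro a b hab
      have h1 := congrFun (congrArg DFunLike.coe hcomp) a
      have h2 := congrFun (congrArg DFunLike.coe hcomp) b
      simp only [AlgHom.comp_apply, AlgHom.id_apply] at h1 h2
      rw [← h1, ← h2, hab]
    · rintro d x ⟨f, hf, rfl⟩
      exact ⟨0, C (aeval (fun _ : Partition ↥W => (1 : K)) f),
        isHomogeneous_C _ _, (hιmk f).symm⟩
    · rintro d x ⟨f, hf, rfl⟩
      exact ⟨d, rename (resPart W) f, hf.rename_isHomogeneous, (hπmk f).symm⟩

end RetractAux


theorem stmt5 {V : Type} [Fintype V] (K : Type) [Field K]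
    (G₁ G₂ : SimpleGraph V) (V₁ V₂ : Set V)
    (hcover : V₁ ∪ V₂ = Set.univ)
    (h₁ : ∀ x y : V, G₁.Adj x y → x ∈ V₁ ∧ y ∈ V₁)
    (h₂ : ∀ x y : V, G₂.Adj x y → x ∈ V₂ ∧ y ∈ V₂)
    (hH : ∀ x ∈ V₁ ∩ V₂, ∀ y ∈ V₁ ∩ V₂, (G₁.Adj x y ↔ G₂.Adj x y))
    (v : V) (hv : v ∈ V₁ ∩ V₂)
    (hdeg : ∀ x ∈ V₁ ∩ V₂, x ≠ v → G₁.Adj v x) :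
    (CutAlgebraRetract K (SimpleGraph.induce V₁ (G₁ ⊔ G₂)) (G₁ ⊔ G₂) ∧
      CutAlgebraRetract K (SimpleGraph.induce V₂ (G₁ ⊔ G₂)) (G₁ ⊔ G₂)) ∧
    ((V₂ \ V₁).Nonempty → IsNeighborhoodMinor (G₁ ⊔ G₂) V₁) ∧
    ((V₁ \ V₂).Nonempty → IsNeighborhoodMinor (G₁ ⊔ G₂) V₂) := by
  classical
  have hyp1 : ∀ x y, (G₁ ⊔ G₂).Adj x y → y ∉ V₁ → x ∈ V₁ → x ≠ v → (G₁ ⊔ G₂).Adj v x := by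
    intro x y hxy hy hx hxv
    rcases (SimpleGraph.sup_adj G₁ G₂ x y).mp hxy with h | h
    · exact absurd (h₁ x y h).2 hy
    · exact (SimpleGraph.sup_adj G₁ G₂ v x).mpr (Or.inl (hdeg x ⟨hx, (h₂ x y h).1⟩ hxv))
  have hyp2 : ∀ x y, (G₁ ⊔ G₂).Adj x y → y ∉ V₂ → x ∈ V₂ → x ≠ v → (G₁ ⊔ G₂).Adj v x := by
    intro x y hxy hy hx hxv
    rcases (SimpleGraph.sup_adj G₁ G₂ x y).mp hxy with h | h
    · exact (SimpleGraph.sup_adj G₁ G₂ v x).mpr (Or.inl (hdeg x ⟨(h₁ x y h).1, hx⟩ hxv))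
    · exact absurd (h₂ x y h).2 hy
  refine ⟨⟨retract_induce V₁ K (G₁ ⊔ G₂) v hv.1 hyp1,
          retract_induce V₂ K (G₁ ⊔ G₂) v hv.2 hyp2⟩, ?_, ?_⟩
  · rintro ⟨w, hw⟩
    refine ⟨⟨v, hv.1⟩, ⟨w, hw.2⟩, v, hv.1, ?_⟩
    rintro x hx ⟨y, hy, hyx⟩
    by_cases hxv : x = v
    · exact Or.inl hxv
    · exact Or.inr (hyp1 x y (SimpleGraph.adj_symm _ hyx) hy hx hxv)
  · rintro ⟨w, hw⟩
    refine ⟨⟨v, hv.2⟩, ⟨w, hw.2⟩, v, hv.2, ?_⟩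
    rintro x hx ⟨y, hy, hyx⟩
    by_cases hxv : x = v
    · exact Or.inl hxv
    · exact Or.inr (hyp2 x y (SimpleGraph.adj_symm _ hyx) hy hx hxv)


end CutPaper
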